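/- Let φ ∈ ℝ[z₁,z₂], let J ≥ 1, K ≥ 0, A ≥ 2 be integers, let c ≠ 0, and suppose that φ − z₁^J − c z₁^K z₂^A is divisible by z₂^{A+1}. If the operator T = T_{[−1,1]²} is of restricted weak type (p,q) for some 1 ≤ p, q ≤ ∞, then 1/q ≥ ((A+1)/(2A+1))·(1/p) − 1/(2A+1), and (by duality) also 1/q ≥ ((2A+1)/(A+1))·(1/p) − 1. -/

import Mathlib

open MeasureTheory MvPolynomial
open scoped ENNReal

/-- The averaging operator `T_R f(x) = ∫_R f(x₁ − t₁, x₂ − t₂, x₃ − φ(t)) dt`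
acting on nonnegative measurable functions on ℝ³. -/
noncomputable def avgOp (φ : ℝ × ℝ → ℝ) (R : Set (ℝ × ℝ))
    (f : ℝ × ℝ × ℝ → ℝ≥0∞) (x : ℝ × ℝ × ℝ) : ℝ≥0∞ :=
  ∫⁻ t in R, f (x.1 - t.1, x.2.1 - t.2, x.2.2 - φ t)

/-- The bilinear pairing `⟨T_R χ_E, χ_F⟩`. -/
noncomputable def pairing (φ : ℝ × ℝ → ℝ) (R : Set (ℝ × ℝ))
    (E F : Set (ℝ × ℝ × ℝ)) : ℝ≥0∞ :=
  ∫⁻ x, avgOp φ R (E.indicator 1) x * F.indicator 1 x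

/-- `T_R` is of restricted weak type `(p,q)`, written in terms of the reciprocals
`pinv = 1/p`, `qinv = 1/q` (so `1 ≤ p, q ≤ ∞` corresponds to `pinv, qinv ∈ [0,1]`):
there is `C < ∞` with `⟨T_R χ_E, χ_F⟩ ≤ C |E|^{1/p} |F|^{1−1/q}` for all measurable
`E, F ⊆ ℝ³` of finite measure. -/
def RWT (φ : ℝ × ℝ → ℝ) (R : Set (ℝ × ℝ)) (pinv qinv : ℝ) : Prop :=
  ∃ C : ℝ, 0 ≤ C ∧ ∀ E F : Set (ℝ × ℝ × ℝ), MeasurableSet E → MeasurableSet F →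
    volume E < ⊤ → volume F < ⊤ →
    pairing φ R E F ≤ ENNReal.ofReal C * volume E ^ pinv * volume F ^ (1 - qinv)

/-- The unit square `[−1,1]²` in ℝ². -/
def unitSquare : Set (ℝ × ℝ) := Set.Icc ((-1, -1) : ℝ × ℝ) (1, 1)

/-! ### Auxiliary lemmas -/

lemma pow_diff_bound (n : ℕ) : ∀ x y : ℝ, |x| ≤ 1 → |y| ≤ 1 → |x ^ n - y ^ n| ≤ n * |x - y| := by
  induction n with
  | zero => intro x y _ _; simp
  | succ n ih =>
    intro x y hx hy
    have h1 : x ^ (n+1) - y ^ (n+1) = x * (x ^ n - y ^ n) + y ^ n * (x - y) := by ring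
    have h2 := ih x y hx hy
    have h3 : |y ^ n| ≤ 1 := by
      rw [abs_pow]; exact pow_le_one₀ (abs_nonneg y) hy
    have h4 : |x * (x ^ n - y ^ n)| ≤ 1 * (n * |x - y|) := by
      rw [abs_mul]
      exact mul_le_mul hx h2 (abs_nonneg _) zero_le_one
    have h5 : |y ^ n * (x - y)| ≤ 1 * |x - y| := by
      rw [abs_mul]
      exact mul_le_mul_of_nonneg_right h3 (abs_nonneg _)
    calc |x ^ (n+1) - y ^ (n+1)| ≤ |x * (x ^ n - y ^ n)| + |y ^ n * (x - y)| := by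
          rw [h1]; exact abs_add_le _ _
      _ ≤ 1 * (n * |x - y|) + 1 * |x - y| := add_le_add h4 h5
      _ = (↑(n+1)) * |x - y| := by push_cast; ring

lemma exp_extract {a e K : ℝ} (hK : 0 < K)
    (h : ∀ δ : ℝ, 0 < δ → δ ≤ 1/2 → δ ^ a ≤ K * δ ^ e) : e ≤ a := by
  by_contra h'
  push_neg at h'
  set η := e - a with hη
  have hηpos : 0 < η := by rw [hη]; linarith
  set r := (1/(2*K)) ^ (1/η) with hr
  have hrpos : 0 < r := Real.rpow_pos_of_pos (by positivity) _
  set δ := min (1/2) r with hδ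
  have hδpos : 0 < δ := lt_min (by norm_num) hrpos
  have hδle : δ ≤ 1/2 := min_le_left _ _
  have key := h δ hδpos hδle
  have he : δ ^ e = δ ^ a * δ ^ η := by
    rw [← Real.rpow_add hδpos]; congr 1; rw [hη]; ring
  rw [he] at key
  have hpa : 0 < δ ^ a := Real.rpow_pos_of_pos hδpos _
  have key2 : 1 ≤ K * δ ^ η := by
    calc (1:ℝ) = δ ^ a / δ ^ a := by rw [div_self (ne_of_gt hpa)]
      _ ≤ K * (δ ^ a * δ ^ η) / δ ^ a := by gcongr
      _ = K * δ ^ η := by field_simp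
  have hδη : δ ^ η ≤ 1/(2*K) := by
    calc δ ^ η ≤ r ^ η := Real.rpow_le_rpow (le_of_lt hδpos) (min_le_right _ _) (le_of_lt hηpos)
      _ = 1/(2*K) := by
          rw [hr, ← Real.rpow_mul (by positivity), one_div η, inv_mul_cancel₀ (ne_of_gt hηpos),
            Real.rpow_one]
  have : (1:ℝ) ≤ 1/2 := by
    calc (1:ℝ) ≤ K * δ ^ η := key2
      _ ≤ K * (1/(2*K)) := by gcongr
      _ = 1/2 := by field_simp
  linarith

lemma rpow_le_max {x : ℝ} (r : ℝ) (hx : 0 < x) (hr0 : 0 ≤ r) (hr1 : r ≤ 1) :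
    x ^ r ≤ max 1 x := by
  by_cases h : x ≤ 1
  · exact le_trans (Real.rpow_le_one (le_of_lt hx) h hr0) (le_max_left _ _)
  · push_neg at h
    calc x ^ r ≤ x ^ (1:ℝ) := Real.rpow_le_rpow_of_exponent_le (le_of_lt h) hr1
      _ = x := Real.rpow_one x
      _ ≤ max 1 x := le_max_right _ _

lemma extract_exponent {Cc c₁ c₂ c₃ : ℝ} {n₁ n₂ n₃ : ℕ} {pinv qinv : ℝ}
    (hC : 0 ≤ Cc) (hc₁ : 0 < c₁) (hc₂ : 0 < c₂) (hc₃ : 0 < c₃)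
    (hp0 : 0 ≤ pinv) (hp1 : pinv ≤ 1) (hq0 : 0 ≤ 1 - qinv) (hq1 : 1 - qinv ≤ 1)
    (h : ∀ δ : ℝ, 0 < δ → δ ≤ 1/2 →
      c₁ * δ ^ n₁ ≤ Cc * (c₂ * δ ^ n₂) ^ pinv * (c₃ * δ ^ n₃) ^ (1 - qinv)) :
    (n₂ : ℝ) * pinv + (n₃ : ℝ) * (1 - qinv) ≤ (n₁ : ℝ) := by
  have hKpos : 0 < (Cc * (max 1 c₂) * (max 1 c₃) + 1) / c₁ := by positivity
  apply exp_extract hKpos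
  intro δ hδ hδ2
  have hδn : ∀ n : ℕ, (0:ℝ) < δ ^ n := fun n => pow_pos hδ n
  have key := h δ hδ hδ2
  have e₂ : (c₂ * δ ^ n₂) ^ pinv ≤ max 1 c₂ * δ ^ ((n₂ : ℝ) * pinv) := by
    rw [Real.mul_rpow (le_of_lt hc₂) (le_of_lt (hδn n₂)), ← Real.rpow_natCast δ n₂,
      ← Real.rpow_mul (le_of_lt hδ)]
    exact mul_le_mul_of_nonneg_right (rpow_le_max pinv hc₂ hp0 hp1)
      (Real.rpow_nonneg (le_of_lt hδ) _)
  have e₃ : (c₃ * δ ^ n₃) ^ (1 - qinv) ≤ max 1 c₃ * δ ^ ((n₃ : ℝ) * (1 - qinv)) := by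
    rw [Real.mul_rpow (le_of_lt hc₃) (le_of_lt (hδn n₃)), ← Real.rpow_natCast δ n₃,
      ← Real.rpow_mul (le_of_lt hδ)]
    exact mul_le_mul_of_nonneg_right (rpow_le_max (1 - qinv) hc₃ hq0 hq1)
      (Real.rpow_nonneg (le_of_lt hδ) _)
  have hrp : ∀ y : ℝ, (0:ℝ) ≤ δ ^ y := fun y => Real.rpow_nonneg (le_of_lt hδ) y
  have main : c₁ * δ ^ ((n₁:ℝ)) ≤
      (Cc * (max 1 c₂) * (max 1 c₃)) * δ ^ ((n₂:ℝ) * pinv + (n₃:ℝ) * (1 - qinv)) := by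
    rw [Real.rpow_natCast, Real.rpow_add hδ]
    calc c₁ * δ ^ n₁ ≤ Cc * (c₂ * δ ^ n₂) ^ pinv * (c₃ * δ ^ n₃) ^ (1 - qinv) := key
      _ ≤ Cc * (max 1 c₂ * δ ^ ((n₂:ℝ) * pinv)) * (max 1 c₃ * δ ^ ((n₃:ℝ) * (1 - qinv))) := by
          apply mul_le_mul
          · exact mul_le_mul_of_nonneg_left e₂ hC
          · exact e₃
          · positivity
          · positivity
      _ = Cc * (max 1 c₂) * (max 1 c₃) * (δ ^ ((n₂:ℝ) * pinv) * δ ^ ((n₃:ℝ) * (1 - qinv))) := by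
          ring
  rw [div_mul_eq_mul_div, le_div_iff₀ hc₁]
  calc δ ^ ((n₁:ℝ)) * c₁ = c₁ * δ ^ ((n₁:ℝ)) := by ring
    _ ≤ (Cc * (max 1 c₂) * (max 1 c₃)) * δ ^ ((n₂:ℝ) * pinv + (n₃:ℝ) * (1 - qinv)) := main
    _ ≤ (Cc * (max 1 c₂) * (max 1 c₃) + 1) * δ ^ ((n₂:ℝ) * pinv + (n₃:ℝ) * (1 - qinv)) := by
        apply mul_le_mul_of_nonneg_right _ (hrp _)
        linarith

def slab (g : ℝ → ℝ) (a b c d l r : ℝ) : Set (ℝ × ℝ × ℝ) :=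
  {p | p.1 ∈ Set.Icc a b ∧ p.2.1 ∈ Set.Icc c d ∧ p.2.2 - g p.1 ∈ Set.Icc l r}

lemma slab_measurableSet {g : ℝ → ℝ} (hg : Measurable g) (a b c d l r : ℝ) :
    MeasurableSet (slab g a b c d l r) := by
  have h1 : MeasurableSet {p : ℝ × ℝ × ℝ | p.1 ∈ Set.Icc a b} :=
    measurable_fst measurableSet_Icc
  have h2 : MeasurableSet {p : ℝ × ℝ × ℝ | p.2.1 ∈ Set.Icc c d} :=
    (measurable_fst.comp measurable_snd) measurableSet_Icc
  have h3 : MeasurableSet {p : ℝ × ℝ × ℝ | p.2.2 - g p.1 ∈ Set.Icc l r} :=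
    ((measurable_snd.comp measurable_snd).sub (hg.comp measurable_fst)) measurableSet_Icc
  have : slab g a b c d l r =
      {p : ℝ × ℝ × ℝ | p.1 ∈ Set.Icc a b} ∩
      ({p : ℝ × ℝ × ℝ | p.2.1 ∈ Set.Icc c d} ∩
        {p : ℝ × ℝ × ℝ | p.2.2 - g p.1 ∈ Set.Icc l r}) := by
    ext p; simp [slab, and_assoc]
  rw [this]
  exact h1.inter (h2.inter h3)

lemma slab_volume {g : ℝ → ℝ} (hg : Measurable g) {a b c d l r : ℝ}
    (hab : a ≤ b) (hcd : c ≤ d) (hlr : l ≤ r) :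
    volume (slab g a b c d l r) = ENNReal.ofReal ((b - a) * ((d - c) * (r - l))) := by
  rw [Measure.volume_eq_prod, Measure.prod_apply (slab_measurableSet hg a b c d l r)]
  have hslice : ∀ u : ℝ, volume (Prod.mk u ⁻¹' slab g a b c d l r) =
      (Set.Icc a b).indicator (fun _ => ENNReal.ofReal (d - c) * ENNReal.ofReal (r - l)) u := by
    intro u
    by_cases hu : u ∈ Set.Icc a b
    · have : Prod.mk u ⁻¹' slab g a b c d l r = Set.Icc c d ×ˢ Set.Icc (g u + l) (g u + r) := by
        ext q
        simp only [slab, Set.mem_preimage, Set.mem_setOf_eq, Set.mem_prod, Set.mem_Icc]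
        constructor
        · rintro ⟨_, h2, h3⟩; exact ⟨h2, by constructor <;> linarith [h3.1, h3.2]⟩
        · rintro ⟨h2, h3⟩; exact ⟨hu, h2, by constructor <;> linarith [h3.1, h3.2]⟩
      rw [this, Set.indicator_of_mem hu]
      rw [Measure.volume_eq_prod, Measure.prod_prod, Real.volume_Icc, Real.volume_Icc]
      congr 2
      ring
    · have : Prod.mk u ⁻¹' slab g a b c d l r = ∅ := by
        ext q
        simp only [slab, Set.mem_preimage, Set.mem_setOf_eq, Set.mem_empty_iff_false, iff_false]
        intro h; exact hu h.1
      rw [this, Set.indicator_of_notMem hu, measure_empty]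
  simp_rw [hslice]
  rw [lintegral_indicator_const measurableSet_Icc, Real.volume_Icc, mul_comm,
    ← ENNReal.ofReal_mul (by linarith), ← ENNReal.ofReal_mul (by linarith)]

lemma box_volume {a₁ b₁ a₂ b₂ a₃ b₃ : ℝ} (h1 : a₁ ≤ b₁) (h2 : a₂ ≤ b₂) :
    volume (Set.Icc a₁ b₁ ×ˢ Set.Icc a₂ b₂ ×ˢ Set.Icc a₃ b₃) =
      ENNReal.ofReal ((b₁ - a₁) * ((b₂ - a₂) * (b₃ - a₃))) := by
  rw [Measure.volume_eq_prod, Measure.prod_prod]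
  rw [Measure.volume_eq_prod, Measure.prod_prod]
  rw [Real.volume_Icc, Real.volume_Icc, Real.volume_Icc]
  rw [ENNReal.ofReal_mul (by linarith : (0:ℝ) ≤ b₁ - a₁)]
  rw [ENNReal.ofReal_mul (by linarith : (0:ℝ) ≤ b₂ - a₂)]

lemma pairing_lower (φ : ℝ × ℝ → ℝ) (E F : Set (ℝ × ℝ × ℝ)) (hF : MeasurableSet F)
    (m : ℝ≥0∞) (B : ℝ × ℝ × ℝ → Set (ℝ × ℝ))
    (hBmeas : ∀ x ∈ F, MeasurableSet (B x))
    (hBsub : ∀ x ∈ F, B x ⊆ unitSquare)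
    (hBm : ∀ x ∈ F, m ≤ volume (B x))
    (hmem : ∀ x ∈ F, ∀ t ∈ B x, (x.1 - t.1, x.2.1 - t.2, x.2.2 - φ t) ∈ E) :
    m * volume F ≤ pairing φ unitSquare E F := by
  have step1 : ∀ x, F.indicator (fun _ => m) x ≤
      avgOp φ unitSquare (E.indicator 1) x * F.indicator 1 x := by
    intro x
    by_cases hx : x ∈ F
    · rw [Set.indicator_of_mem hx, Set.indicator_of_mem hx]
      simp only [Pi.one_apply, mul_one]
      have hpt : ∀ t : ℝ × ℝ, (B x).indicator (1 : ℝ × ℝ → ℝ≥0∞) t ≤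
          E.indicator 1 (x.1 - t.1, x.2.1 - t.2, x.2.2 - φ t) := by
        intro t
        by_cases ht : t ∈ B x
        · rw [Set.indicator_of_mem ht, Set.indicator_of_mem (hmem x hx t ht)]; rfl
        · rw [Set.indicator_of_notMem ht]; exact zero_le
      calc m ≤ volume (B x) := hBm x hx
        _ = volume (B x ∩ unitSquare) := by
            rw [Set.inter_eq_self_of_subset_left (hBsub x hx)]
        _ = ∫⁻ t in unitSquare, (B x).indicator (1 : ℝ × ℝ → ℝ≥0∞) t := by
            rw [lintegral_indicator_one (hBmeas x hx), Measure.restrict_apply (hBmeas x hx)]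
        _ ≤ avgOp φ unitSquare (E.indicator 1) x := lintegral_mono hpt
    · rw [Set.indicator_of_notMem hx, Set.indicator_of_notMem hx, mul_zero]
  calc m * volume F = ∫⁻ x, F.indicator (fun _ => m) x := by
        rw [lintegral_indicator_const hF]
    _ ≤ pairing φ unitSquare E F := lintegral_mono step1

lemma eval_abs_bound (ψ : MvPolynomial (Fin 2) ℝ) :
    ∃ H : ℝ, 0 ≤ H ∧ ∀ x : Fin 2 → ℝ, (∀ i, |x i| ≤ 1) → |eval x ψ| ≤ H := by
  refine ⟨∑ d ∈ ψ.support, |coeff d ψ|, Finset.sum_nonneg fun _ _ => abs_nonneg _, ?_⟩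
  intro x hx
  rw [eval_eq]
  calc |∑ d ∈ ψ.support, coeff d ψ * ∏ i ∈ d.support, x i ^ d i|
      ≤ ∑ d ∈ ψ.support, |coeff d ψ * ∏ i ∈ d.support, x i ^ d i| :=
        Finset.abs_sum_le_sum_abs _ _
    _ ≤ ∑ d ∈ ψ.support, |coeff d ψ| := by
        apply Finset.sum_le_sum
        intro d _
        rw [abs_mul]
        have hb : |∏ i ∈ d.support, x i ^ d i| ≤ 1 := by
          rw [Finset.abs_prod]
          apply Finset.prod_le_one
          · intro i _; positivity
          · intro i _; rw [abs_pow]; exact pow_le_one₀ (abs_nonneg _) (hx i)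
        calc |coeff d ψ| * |∏ i ∈ d.support, x i ^ d i| ≤ |coeff d ψ| * 1 :=
              mul_le_mul_of_nonneg_left hb (abs_nonneg _)
          _ = |coeff d ψ| := mul_one _

set_option maxHeartbeats 2000000 in
/-- If `φ − z₁^J − c z₁^K z₂^A` is divisible by `z₂^{A+1}` (J ≥ 1, K ≥ 0, A ≥ 2, c ≠ 0)
and `T = T_{[−1,1]²}` is of restricted weak type `(p,q)`, then
`1/q ≥ ((A+1)/(2A+1))(1/p) − 1/(2A+1)` and (by duality) `1/q ≥ ((2A+1)/(A+1))(1/p) − 1`. -/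
theorem stmt_14 (φp : MvPolynomial (Fin 2) ℝ) (J K A : ℕ) (hJ : 1 ≤ J) (hA : 2 ≤ A)
    (c : ℝ) (hc : c ≠ 0)
    (hdvd : (X 1 : MvPolynomial (Fin 2) ℝ) ^ (A + 1) ∣
      φp - X 0 ^ J - C c * X 0 ^ K * X 1 ^ A)
    (pinv qinv : ℝ) (hp0 : 0 ≤ pinv) (hp1 : pinv ≤ 1) (hq0 : 0 ≤ qinv) (hq1 : qinv ≤ 1)
    (hrwt : RWT (fun t => eval ![t.1, t.2] φp) unitSquare pinv qinv) :
    ((A : ℝ) + 1) / (2 * (A : ℝ) + 1) * pinv - 1 / (2 * (A : ℝ) + 1) ≤ qinv ∧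
    (2 * (A : ℝ) + 1) / ((A : ℝ) + 1) * pinv - 1 ≤ qinv := by
  obtain ⟨ψ, hψ⟩ := hdvd
  have heval : ∀ s v : ℝ,
      eval ![s, v] φp = s ^ J + c * s ^ K * v ^ A + v ^ (A + 1) * eval ![s, v] ψ := by
    intro s v
    have h := congrArg (eval ![s, v]) hψ
    simp only [map_sub, map_mul, map_pow, eval_X, eval_C, Matrix.cons_val_zero,
      Matrix.cons_val_one, Matrix.head_cons] at h
    linarith [h]
  obtain ⟨H, hH0, hHb⟩ := eval_abs_bound ψ
  set M : ℝ := |c| + H with hMdef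
  have hM0 : 0 ≤ M := add_nonneg (abs_nonneg c) hH0
  have hfb : ∀ s v : ℝ, |s| ≤ 1 → 0 ≤ v → v ≤ 1 →
      |eval ![s, v] φp - s ^ J| ≤ M * v ^ A := by
    intro s v hs hv0 hv1
    have hvabs : |v| ≤ 1 := by rw [abs_of_nonneg hv0]; exact hv1
    have hbd := hHb ![s, v] (by
      intro i; fin_cases i
      · simpa using hs
      · simpa using hvabs)
    have hvA : (0:ℝ) ≤ v ^ A := pow_nonneg hv0 A
    have h1 : |c * s ^ K * v ^ A| ≤ |c| * v ^ A := by
      rw [abs_mul, abs_mul, abs_pow, abs_pow, abs_of_nonneg hv0]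
      have hsK : |s| ^ K ≤ 1 := pow_le_one₀ (abs_nonneg s) hs
      calc |c| * |s| ^ K * v ^ A ≤ |c| * 1 * v ^ A := by
            apply mul_le_mul_of_nonneg_right _ hvA
            exact mul_le_mul_of_nonneg_left hsK (abs_nonneg c)
        _ = |c| * v ^ A := by ring
    have h2 : |v ^ (A + 1) * eval ![s, v] ψ| ≤ H * v ^ A := by
      rw [abs_mul, abs_pow, abs_of_nonneg hv0, pow_succ]
      calc v ^ A * v * |eval ![s, v] ψ| ≤ v ^ A * v * H :=
            mul_le_mul_of_nonneg_left hbd (mul_nonneg hvA hv0)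
        _ ≤ v ^ A * 1 * H := mul_le_mul_of_nonneg_right
            (mul_le_mul_of_nonneg_left hv1 hvA) hH0
        _ = H * v ^ A := by ring
    have heq : eval ![s, v] φp - s ^ J
        = c * s ^ K * v ^ A + v ^ (A + 1) * eval ![s, v] ψ := by
      rw [heval s v]; ring
    rw [heq, hMdef]
    calc |c * s ^ K * v ^ A + v ^ (A + 1) * eval ![s, v] ψ|
        ≤ |c * s ^ K * v ^ A| + |v ^ (A + 1) * eval ![s, v] ψ| := abs_add_le _ _
      _ ≤ |c| * v ^ A + H * v ^ A := add_le_add h1 h2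
      _ = (|c| + H) * v ^ A := by ring
  set κ : ℝ := ((8:ℝ) * ((J:ℝ) + 1))⁻¹ with hκdef
  set ε : ℝ := ((8:ℝ) * 2 ^ A * (M + 1))⁻¹ with hεdef
  have hJ0 : (0:ℝ) ≤ (J:ℝ) := Nat.cast_nonneg J
  have h2A0 : (0:ℝ) < 2 ^ A := by positivity
  have h2A1 : (1:ℝ) ≤ 2 ^ A := one_le_pow₀ (by norm_num)
  have hκpos : 0 < κ := by rw [hκdef]; positivity
  have hεpos : 0 < ε := by rw [hεdef]; positivity
  have hκ1 : κ ≤ 1 := by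
    rw [hκdef]
    rw [inv_le_one_iff₀]
    right; nlinarith
  have hε1 : ε ≤ 1 := by
    rw [hεdef]
    rw [inv_le_one_iff₀]
    right; nlinarith
  have hJκ : (J:ℝ) * κ ≤ 1/8 := by
    rw [hκdef, inv_eq_one_div, mul_one_div, div_le_div_iff₀ (by positivity) (by norm_num)]
    nlinarith
  have hMε : M * 2 ^ A * ε ≤ 1/8 := by
    rw [hεdef, inv_eq_one_div, mul_one_div, div_le_div_iff₀ (by positivity) (by norm_num)]
    nlinarith
  have hεA : ε ^ A ≤ ε := pow_le_of_le_one (le_of_lt hεpos) hε1 (by omega)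
  -- uniform error bound
  have herr : ∀ δ s v : ℝ, 0 < δ → δ ≤ 1/2 → |s| ≤ 1 → 0 ≤ v → v ≤ 2 * ε * δ →
      |eval ![s, v] φp - s ^ J| ≤ δ ^ A / 8 := by
    intro δ s v hδ hδ2 hs hv0 hv
    have hδA0 : (0:ℝ) < δ ^ A := pow_pos hδ A
    have h2εδ1 : 2 * ε * δ ≤ 1 := by nlinarith
    have h1 := hfb s v hs hv0 (le_trans hv h2εδ1)
    have h2 : v ^ A ≤ (2 * ε * δ) ^ A := pow_le_pow_left₀ hv0 hv A
    calc |eval ![s, v] φp - s ^ J| ≤ M * v ^ A := h1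
      _ ≤ M * (2 * ε * δ) ^ A := mul_le_mul_of_nonneg_left h2 hM0
      _ = (M * 2 ^ A * ε ^ A) * δ ^ A := by rw [mul_pow, mul_pow]; ring
      _ ≤ (M * 2 ^ A * ε) * δ ^ A := by
          apply mul_le_mul_of_nonneg_right _ (le_of_lt hδA0)
          exact mul_le_mul_of_nonneg_left hεA (mul_nonneg hM0 (le_of_lt h2A0))
      _ ≤ (1/8) * δ ^ A := mul_le_mul_of_nonneg_right hMε (le_of_lt hδA0)
      _ = δ ^ A / 8 := by ring
  obtain ⟨Cst, hC0, hCb⟩ := hrwt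
  -- ### Example 1 : E a thin curved slab, F a small box
  have hE1 : ∀ δ : ℝ, 0 < δ → δ ≤ 1/2 →
      (ε * ε * κ / 2) * δ ^ (2*A+2) ≤
        Cst * (6 * δ ^ (A+1)) ^ pinv * ((κ * ε / 2) * δ ^ (2*A+1)) ^ (1 - qinv) := by
    intro δ hδ hδ2
    have hδ1 : δ ≤ 1 := by linarith
    have hδA0 : (0:ℝ) < δ ^ A := pow_pos hδ A
    have hδA1 : δ ^ A ≤ 1 := pow_le_one₀ (le_of_lt hδ) hδ1
    have hκδA0 : (0:ℝ) < κ * δ ^ A := by positivity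
    have hκδ1 : κ * δ ^ A ≤ 1 := by
      have := mul_le_mul_of_nonneg_right hκ1 (le_of_lt hδA0)
      rw [one_mul] at this; linarith
    have hεδδ : ε * δ ≤ δ := mul_le_of_le_one_left (le_of_lt hδ) hε1
    have hεδ0 : 0 < ε * δ := by positivity
    have hεδ1 : ε * δ ≤ 1 := by linarith
    have hJκδ : (J:ℝ) * (κ * δ ^ A) ≤ δ ^ A / 8 := by
      have h := mul_le_mul_of_nonneg_right hJκ (le_of_lt hδA0)
      have he : (J:ℝ) * (κ * δ ^ A) = (J:ℝ) * κ * δ ^ A := by ring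
      rw [he]; linarith
    set g₁ : ℝ → ℝ := fun u => -(1 - u) ^ J with hg₁def
    have hg₁m : Measurable g₁ :=
      ((measurable_const.sub measurable_id).pow_const J).neg
    set E₁ := slab g₁ (-1) 2 (-δ) δ 0 (δ ^ A) with hE₁def
    set F₁ := Set.Icc (1:ℝ) (1 + κ * δ ^ A) ×ˢ Set.Icc (0:ℝ) (ε * δ) ×ˢ
      Set.Icc (δ ^ A / 4) (3 * δ ^ A / 4) with hF₁def
    have hE₁meas : MeasurableSet E₁ := slab_measurableSet hg₁m _ _ _ _ _ _
    have hF₁meas : MeasurableSet F₁ :=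
      measurableSet_Icc.prod (measurableSet_Icc.prod measurableSet_Icc)
    have hvolE₁ : volume E₁ = ENNReal.ofReal (6 * δ ^ (A+1)) := by
      rw [hE₁def, slab_volume hg₁m (by norm_num) (by linarith) (le_of_lt hδA0)]
      congr 1; ring
    have hvolF₁ : volume F₁ = ENNReal.ofReal ((κ * ε / 2) * δ ^ (2*A+1)) := by
      rw [hF₁def, box_volume (by linarith) (by positivity)]
      congr 1; ring
    have key := hCb E₁ F₁ hE₁meas hF₁meas
      (by rw [hvolE₁]; exact ENNReal.ofReal_lt_top)
      (by rw [hvolF₁]; exact ENNReal.ofReal_lt_top)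
    have lower : ENNReal.ofReal (ε * δ) * volume F₁ ≤
        pairing (fun t => eval ![t.1, t.2] φp) unitSquare E₁ F₁ := by
      apply pairing_lower _ _ _ hF₁meas _
        (fun _ => Set.Icc ((0:ℝ), (0:ℝ)) ((1:ℝ), ε * δ))
      · intro x _; exact measurableSet_Icc
      · intro x _
        apply Set.Icc_subset_Icc
        · exact Prod.mk_le_mk.mpr ⟨by norm_num, by norm_num⟩
        · exact Prod.mk_le_mk.mpr ⟨le_refl 1, hεδ1⟩
      · intro x _
        apply le_of_eq
        rw [Set.Icc_prod_eq, Measure.volume_eq_prod, Measure.prod_prod,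
          Real.volume_Icc, Real.volume_Icc]
        norm_num
      · intro x hx t ht
        rw [hF₁def] at hx
        simp only [Set.mem_prod, Set.mem_Icc] at hx
        obtain ⟨⟨hx11, hx12⟩, ⟨hx21, hx22⟩, ⟨hx31, hx32⟩⟩ := hx
        rw [Set.mem_Icc] at ht
        have ht11 : (0:ℝ) ≤ t.1 := (Prod.le_def.mp ht.1).1
        have ht21 : (0:ℝ) ≤ t.2 := (Prod.le_def.mp ht.1).2
        have ht12 : t.1 ≤ 1 := (Prod.le_def.mp ht.2).1
        have ht22 : t.2 ≤ ε * δ := (Prod.le_def.mp ht.2).2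
        rw [hE₁def]
        simp only [slab, Set.mem_setOf_eq, Set.mem_Icc, hg₁def]
        have habs2 : |t.1| ≤ 1 := abs_le.mpr ⟨by linarith, ht12⟩
        have habs1 : |t.1 - (x.1 - 1)| ≤ 1 := abs_le.mpr ⟨by linarith, by linarith⟩
        have he₁ : |(t.1 - (x.1 - 1)) ^ J - t.1 ^ J| ≤ δ ^ A / 8 := by
          have hb := pow_diff_bound J (t.1 - (x.1 - 1)) t.1 habs1 habs2
          have harg : (t.1 - (x.1 - 1)) - t.1 = -(x.1 - 1) := by ring
          rw [harg, abs_neg, abs_of_nonneg (show (0:ℝ) ≤ x.1 - 1 by linarith)] at hb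
          have h2 : (J:ℝ) * (x.1 - 1) ≤ (J:ℝ) * (κ * δ ^ A) :=
            mul_le_mul_of_nonneg_left (by linarith) hJ0
          linarith
        have he₂ : |eval ![t.1, t.2] φp - t.1 ^ J| ≤ δ ^ A / 8 :=
          herr δ t.1 t.2 hδ hδ2 habs2 ht21 (by linarith)
        obtain ⟨he₁l, he₁r⟩ := abs_le.mp he₁
        obtain ⟨he₂l, he₂r⟩ := abs_le.mp he₂
        have harg2 : 1 - (x.1 - t.1) = t.1 - (x.1 - 1) := by ring
        refine ⟨⟨by linarith, by linarith⟩, ⟨by linarith, by linarith⟩, ?_, ?_⟩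
        · rw [sub_neg_eq_add, harg2]
          linarith
        · rw [sub_neg_eq_add, harg2]
          linarith
    have chain : ENNReal.ofReal ((ε * ε * κ / 2) * δ ^ (2*A+2)) ≤
        ENNReal.ofReal (Cst * (6 * δ ^ (A+1)) ^ pinv *
          ((κ * ε / 2) * δ ^ (2*A+1)) ^ (1 - qinv)) := by
      calc ENNReal.ofReal ((ε * ε * κ / 2) * δ ^ (2*A+2))
          = ENNReal.ofReal (ε * δ) * volume F₁ := by
            rw [hvolF₁, ← ENNReal.ofReal_mul (by positivity)]
            congr 1; ring
        _ ≤ pairing (fun t => eval ![t.1, t.2] φp) unitSquare E₁ F₁ := lower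
        _ ≤ ENNReal.ofReal Cst * volume E₁ ^ pinv * volume F₁ ^ (1 - qinv) := key
        _ = ENNReal.ofReal (Cst * (6 * δ ^ (A+1)) ^ pinv *
              ((κ * ε / 2) * δ ^ (2*A+1)) ^ (1 - qinv)) := by
            rw [hvolE₁, hvolF₁, ENNReal.ofReal_rpow_of_pos (by positivity),
              ENNReal.ofReal_rpow_of_pos (by positivity),
              ← ENNReal.ofReal_mul hC0, ← ENNReal.ofReal_mul
                (mul_nonneg hC0 (Real.rpow_nonneg (by positivity) _))]
    exact (ENNReal.ofReal_le_ofReal_iff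
      (mul_nonneg (mul_nonneg hC0 (Real.rpow_nonneg (by positivity) _))
        (Real.rpow_nonneg (by positivity) _))).mp chain
  -- ### Example 2 : E a small box, F a thin curved slab
  have hE2 : ∀ δ : ℝ, 0 < δ → δ ≤ 1/2 →
      (κ * ε * ε / 4) * δ ^ (2*A+2) ≤
        Cst * ((κ * ε) * δ ^ (2*A+1)) ^ pinv * ((ε / 4) * δ ^ (A+1)) ^ (1 - qinv) := by
    intro δ hδ hδ2
    have hδ1 : δ ≤ 1 := by linarith
    have hδA0 : (0:ℝ) < δ ^ A := pow_pos hδ A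
    have hδA1 : δ ^ A ≤ 1 := pow_le_one₀ (le_of_lt hδ) hδ1
    have hκδA0 : (0:ℝ) < κ * δ ^ A := by positivity
    have hκδ1 : κ * δ ^ A ≤ 1 := by
      have := mul_le_mul_of_nonneg_right hκ1 (le_of_lt hδA0)
      rw [one_mul] at this; linarith
    have hεδδ : ε * δ ≤ δ := mul_le_of_le_one_left (le_of_lt hδ) hε1
    have hεδ0 : 0 < ε * δ := by positivity
    have hεδ1 : ε * δ ≤ 1 := by linarith
    have hJκδ : (J:ℝ) * (κ * δ ^ A) ≤ δ ^ A / 8 := by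
      have h := mul_le_mul_of_nonneg_right hJκ (le_of_lt hδA0)
      have he : (J:ℝ) * (κ * δ ^ A) = (J:ℝ) * κ * δ ^ A := by ring
      rw [he]; linarith
    set g₂ : ℝ → ℝ := fun u => u ^ J with hg₂def
    have hg₂m : Measurable g₂ := measurable_id.pow_const J
    set E₂ := Set.Icc (0:ℝ) (κ * δ ^ A) ×ˢ Set.Icc (0:ℝ) (ε * δ) ×ˢ
      Set.Icc (0:ℝ) (δ ^ A) with hE₂def
    set F₂ := slab g₂ (1/2) 1 (ε * δ) (2 * ε * δ) (δ ^ A / 4) (3 * δ ^ A / 4) with hF₂def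
    have hE₂meas : MeasurableSet E₂ :=
      measurableSet_Icc.prod (measurableSet_Icc.prod measurableSet_Icc)
    have hF₂meas : MeasurableSet F₂ := slab_measurableSet hg₂m _ _ _ _ _ _
    have hvolE₂ : volume E₂ = ENNReal.ofReal ((κ * ε) * δ ^ (2*A+1)) := by
      rw [hE₂def, box_volume (by positivity) (by positivity)]
      congr 1; ring
    have hvolF₂ : volume F₂ = ENNReal.ofReal ((ε / 4) * δ ^ (A+1)) := by
      rw [hF₂def, slab_volume hg₂m (by norm_num) (by linarith) (by linarith)]
      congr 1; ring
    have key := hCb E₂ F₂ hE₂meas hF₂meas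
      (by rw [hvolE₂]; exact ENNReal.ofReal_lt_top)
      (by rw [hvolF₂]; exact ENNReal.ofReal_lt_top)
    have lower : ENNReal.ofReal ((κ * δ ^ A) * (ε * δ)) * volume F₂ ≤
        pairing (fun t => eval ![t.1, t.2] φp) unitSquare E₂ F₂ := by
      apply pairing_lower _ _ _ hF₂meas _
        (fun x => Set.Icc ((x.1 - κ * δ ^ A), (x.2.1 - ε * δ)) ((x.1), (x.2.1)))
      · intro x _; exact measurableSet_Icc
      · intro x hx
        rw [hF₂def] at hx
        simp only [slab, Set.mem_setOf_eq, Set.mem_Icc] at hx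
        obtain ⟨⟨hx11, hx12⟩, ⟨hx21, hx22⟩, _⟩ := hx
        apply Set.Icc_subset_Icc
        · exact Prod.mk_le_mk.mpr ⟨by linarith, by linarith⟩
        · exact Prod.mk_le_mk.mpr ⟨by linarith, by linarith⟩
      · intro x _
        apply le_of_eq
        rw [Set.Icc_prod_eq, Measure.volume_eq_prod, Measure.prod_prod,
          Real.volume_Icc, Real.volume_Icc,
          ← ENNReal.ofReal_mul (show (0:ℝ) ≤ x.1 - (x.1 - κ * δ ^ A) by linarith)]
        congr 1; ring
      · intro x hx t ht
        rw [hF₂def] at hx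
        simp only [slab, Set.mem_setOf_eq, Set.mem_Icc, hg₂def] at hx
        obtain ⟨⟨hx11, hx12⟩, ⟨hx21, hx22⟩, ⟨hx31, hx32⟩⟩ := hx
        rw [Set.mem_Icc] at ht
        have ht11 : x.1 - κ * δ ^ A ≤ t.1 := (Prod.le_def.mp ht.1).1
        have ht21 : x.2.1 - ε * δ ≤ t.2 := (Prod.le_def.mp ht.1).2
        have ht12 : t.1 ≤ x.1 := (Prod.le_def.mp ht.2).1
        have ht22 : t.2 ≤ x.2.1 := (Prod.le_def.mp ht.2).2
        rw [hE₂def]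
        simp only [Set.mem_prod, Set.mem_Icc]
        have habs1 : |t.1| ≤ 1 := abs_le.mpr ⟨by linarith, by linarith⟩
        have habs2 : |x.1| ≤ 1 := abs_le.mpr ⟨by linarith, hx12⟩
        have he₁ : |t.1 ^ J - x.1 ^ J| ≤ δ ^ A / 8 := by
          have hb := pow_diff_bound J t.1 x.1 habs1 habs2
          have : |t.1 - x.1| ≤ κ * δ ^ A := by
            rw [abs_le]; constructor <;> linarith
          have h2 : (J:ℝ) * |t.1 - x.1| ≤ (J:ℝ) * (κ * δ ^ A) :=
            mul_le_mul_of_nonneg_left this hJ0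
          linarith
        have he₂ : |eval ![t.1, t.2] φp - t.1 ^ J| ≤ δ ^ A / 8 :=
          herr δ t.1 t.2 hδ hδ2 habs1 (by linarith) (by linarith)
        obtain ⟨he₁l, he₁r⟩ := abs_le.mp he₁
        obtain ⟨he₂l, he₂r⟩ := abs_le.mp he₂
        refine ⟨⟨by linarith, by linarith⟩, ⟨by linarith, by linarith⟩, by linarith, by linarith⟩
    have chain : ENNReal.ofReal ((κ * ε * ε / 4) * δ ^ (2*A+2)) ≤
        ENNReal.ofReal (Cst * ((κ * ε) * δ ^ (2*A+1)) ^ pinv *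
          ((ε / 4) * δ ^ (A+1)) ^ (1 - qinv)) := by
      calc ENNReal.ofReal ((κ * ε * ε / 4) * δ ^ (2*A+2))
          = ENNReal.ofReal ((κ * δ ^ A) * (ε * δ)) * volume F₂ := by
            rw [hvolF₂, ← ENNReal.ofReal_mul (by positivity)]
            congr 1; ring
        _ ≤ pairing (fun t => eval ![t.1, t.2] φp) unitSquare E₂ F₂ := lower
        _ ≤ ENNReal.ofReal Cst * volume E₂ ^ pinv * volume F₂ ^ (1 - qinv) := key
        _ = ENNReal.ofReal (Cst * ((κ * ε) * δ ^ (2*A+1)) ^ pinv *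
              ((ε / 4) * δ ^ (A+1)) ^ (1 - qinv)) := by
            rw [hvolE₂, hvolF₂, ENNReal.ofReal_rpow_of_pos (by positivity),
              ENNReal.ofReal_rpow_of_pos (by positivity),
              ← ENNReal.ofReal_mul hC0, ← ENNReal.ofReal_mul
                (mul_nonneg hC0 (Real.rpow_nonneg (by positivity) _))]
    exact (ENNReal.ofReal_le_ofReal_iff
      (mul_nonneg (mul_nonneg hC0 (Real.rpow_nonneg (by positivity) _))
        (Real.rpow_nonneg (by positivity) _))).mp chain
  -- ### extract the exponent inequalities
  have hexp1 := extract_exponent hC0 (by positivity) (by norm_num) (by positivity)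
    hp0 hp1 (by linarith) (by linarith) hE1
  have hexp2 := extract_exponent hC0 (by positivity) (by positivity) (by positivity)
    hp0 hp1 (by linarith) (by linarith) hE2
  push_cast at hexp1 hexp2
  have hA2 : (2:ℝ) ≤ (A:ℝ) := by exact_mod_cast hA
  have h2A : (0:ℝ) < 2 * (A:ℝ) + 1 := by linarith
  have hA1 : (0:ℝ) < (A:ℝ) + 1 := by linarith
  constructor
  · rw [div_mul_eq_mul_div, div_sub_div_same, div_le_iff₀ h2A]
    linarith
  · rw [div_mul_eq_mul_div, sub_le_iff_le_add, div_le_iff₀ hA1]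
    linarith
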